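/- Assume P = Q, let l(x) = x^- = max(−x, 0), and let α_k > 0 for every k ∈ {1,…,n}. Define ŴV_{n−1} = E[ S_n | ℱ_{n−1} ] − α_n and, for k ∈ {1,…,n−1}, ŴV_{k−1} = max{ E[ ŴV_k | ℱ_{k−1} ], E[ ŴV_k ∨ S_k − α_k | ℱ_{k−1} ] }. Then for every t ∈ {0,…,n−1}, ŴV_t is an essential infimum of { M_t : (M_s)_{s=t}^n ∈ ℳ_{TC,t} }. -/

import Mathlib

open MeasureTheory Filter
open scoped MeasureTheory

/-- A supermartingale (under measure `μ`) on the discrete time interval `{a,…,b}`. -/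
def IsSupermartingaleOn {Ω : Type*} {m0 : MeasurableSpace Ω}
    (𝓕 : MeasureTheory.Filtration ℕ m0) (μ : Measure Ω)
    (M : ℕ → Ω → ℝ) (a b : ℕ) : Prop :=
  (∀ k, a ≤ k → k ≤ b → StronglyMeasurable[𝓕 k] (M k)) ∧
  (∀ k, a ≤ k → k ≤ b → Integrable (M k) μ) ∧
  (∀ k, a ≤ k → k < b → (μ[M (k + 1)|𝓕 k]) ≤ᵐ[μ] M k)

/-- Membership in `ℳ_{TC,k}` with loss function `l(x) = x⁻ = max(-x,0)`, under
`P = Q`: a `P`-supermartingale `(M_t)_{t=k}^n` with `(M_t - S_t)⁻` integrable and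
`E[(M_t - S_t)⁻ | F_{t-1}] ≤ α_t` a.s. for every `t ∈ {k+1,…,n}`. -/
def MemTCneg {Ω : Type*} {m0 : MeasurableSpace Ω}
    (𝓕 : MeasureTheory.Filtration ℕ m0) (P : Measure Ω)
    (S : ℕ → Ω → ℝ) (α : ℕ → ℝ) (k n : ℕ) (M : ℕ → Ω → ℝ) : Prop :=
  IsSupermartingaleOn 𝓕 P M k n ∧
  ∀ t, k + 1 ≤ t → t ≤ n →
    Integrable (fun ω => max (-(M t ω - S t ω)) 0) P ∧
    (P[fun ω => max (-(M t ω - S t ω)) 0|𝓕 (t - 1)]) ≤ᵐ[P] fun _ => α t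

/-- `W` is an essential infimum (under `μ`) of the family `A` of random variables. -/
def IsEssInf {Ω : Type*} {m0 : MeasurableSpace Ω} (μ : Measure Ω)
    (A : Set (Ω → ℝ)) (W : Ω → ℝ) : Prop :=
  (∀ M ∈ A, W ≤ᵐ[μ] M) ∧ ∀ W' : Ω → ℝ, (∀ M ∈ A, W' ≤ᵐ[μ] M) → W' ≤ᵐ[μ] W

namespace Stmt10Aux

private lemma max_add_aux (a b : ℝ) : max a b = a + max (b - a) 0 := by
  rcases le_total a b with h | h
  · rw [max_eq_right h, max_eq_left (sub_nonneg.2 h)]; ring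
  · rw [max_eq_left h, max_eq_right (sub_nonpos.2 h)]; ring

private lemma max_add_aux2 (a c : ℝ) : max a (a + c) = a + max c 0 := by
  rcases le_total c 0 with h | h
  · rw [max_eq_left (by linarith), max_eq_right h]; ring
  · rw [max_eq_right (by linarith), max_eq_left h]

variable {Ω : Type*} {m0 : MeasurableSpace Ω}
variable (P : Measure Ω) [IsProbabilityMeasure P] (𝓕 : MeasureTheory.Filtration ℕ m0)
  (n : ℕ) (S : ℕ → Ω → ℝ) (α : ℕ → ℝ) (Vh : ℕ → Ω → ℝ)

/-- one-step estimate: if `X ≤ M (k+1) + penalty (k+1)` then `E[X|F k] - α (k+1) ≤ M k`. -/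
lemma step_le (t k : ℕ) (M : ℕ → Ω → ℝ) (hM : MemTCneg 𝓕 P S α t n M)
    (hk1 : t ≤ k) (hk2 : k + 1 ≤ n) (X : Ω → ℝ) (hX : Integrable X P)
    (hXle : X ≤ᵐ[P] fun ω => M (k+1) ω + max (-(M (k+1) ω - S (k+1) ω)) 0) :
    (fun ω => (P[X|𝓕 k]) ω - α (k+1)) ≤ᵐ[P] M k := by
  obtain ⟨hpen_int, hpen_le⟩ := hM.2 (k+1) (by omega) hk2
  rw [Nat.add_sub_cancel] at hpen_le
  have hMint : Integrable (M (k+1)) P := hM.1.2.1 (k+1) (by omega) hk2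
  have hsum : Integrable (fun ω => M (k+1) ω + max (-(M (k+1) ω - S (k+1) ω)) 0) P :=
    hMint.add hpen_int
  have hsup : (P[M (k+1)|𝓕 k]) ≤ᵐ[P] M k := hM.1.2.2 k hk1 (by omega)
  have h1 : (P[X|𝓕 k]) ≤ᵐ[P]
      P[fun ω => M (k+1) ω + max (-(M (k+1) ω - S (k+1) ω)) 0|𝓕 k] :=
    condExp_mono hX hsum hXle
  have h2 : (P[fun ω => M (k+1) ω + max (-(M (k+1) ω - S (k+1) ω)) 0|𝓕 k])
      =ᵐ[P] P[M (k+1)|𝓕 k] + P[fun ω => max (-(M (k+1) ω - S (k+1) ω)) 0|𝓕 k] :=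
    condExp_add hMint hpen_int _
  filter_upwards [h1, h2, hsup, hpen_le] with ω e1 e2 e3 e4
  simp only [Pi.add_apply] at e2
  linarith

/-- Part 1: the lower bound. -/
lemma lb (hn : 1 ≤ n) (hSint : ∀ t, Integrable (S t) P)
    (hVint : ∀ k, k ≤ n - 1 → Integrable (Vh k) P)
    (hVlast : Vh (n - 1) =ᵐ[P] fun ω => (P[S n|𝓕 (n - 1)]) ω - α n)
    (hVrec : ∀ k, 1 ≤ k → k ≤ n - 1 →
      Vh (k - 1) =ᵐ[P] fun ω =>
        max ((P[Vh k|𝓕 (k - 1)]) ω)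
          ((P[fun ω' => max (Vh k ω') (S k ω') - α k|𝓕 (k - 1)]) ω))
    (t : ℕ) (M : ℕ → Ω → ℝ) (hM : MemTCneg 𝓕 P S α t n M) :
    ∀ d k, k + d = n - 1 → t ≤ k → Vh k ≤ᵐ[P] M k := by
  intro d
  induction d with
  | zero =>
    intro k hk htk
    obtain ⟨m, rfl⟩ : ∃ m, n = m + 1 := ⟨n - 1, by omega⟩
    obtain rfl : k = m := by omega
    simp only [Nat.add_sub_cancel] at hVlast
    have hXle : S (k+1) ≤ᵐ[P]
        fun ω => M (k+1) ω + max (-(M (k+1) ω - S (k+1) ω)) 0 := by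
      refine Eventually.of_forall fun ω => ?_
      show S (k+1) ω ≤ M (k+1) ω + max (-(M (k+1) ω - S (k+1) ω)) 0
      have := le_max_left (-(M (k+1) ω - S (k+1) ω)) 0
      linarith
    have hstep := step_le P 𝓕 (k+1) S α t k M hM htk (by omega) (S (k+1)) (hSint (k+1)) hXle
    exact hVlast.trans_le hstep
  | succ d ih =>
    intro k hk htk
    have h1 : Vh (k+1) ≤ᵐ[P] M (k+1) := ih (k+1) (by omega) (by omega)
    have hk1n : k + 1 ≤ n - 1 := by omega
    have hrec := hVrec (k+1) (by omega) hk1n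
    rw [Nat.add_sub_cancel] at hrec
    have hVk1int : Integrable (Vh (k+1)) P := hVint (k+1) hk1n
    have hMint : Integrable (M (k+1)) P := hM.1.2.1 (k+1) (by omega) (by omega)
    have b1 : (P[Vh (k+1)|𝓕 k]) ≤ᵐ[P] M k :=
      (condExp_mono hVk1int hMint h1).trans (hM.1.2.2 k htk (by omega))
    -- second bound
    set X : Ω → ℝ := fun ω => max (Vh (k+1) ω) (S (k+1) ω) with hX_def
    have hXint : Integrable X P := hVk1int.sup (hSint (k+1))
    have hXle : X ≤ᵐ[P] fun ω => M (k+1) ω + max (-(M (k+1) ω - S (k+1) ω)) 0 := by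
      filter_upwards [h1] with ω hω
      have hmm : max (Vh (k+1) ω) (S (k+1) ω) ≤ max (M (k+1) ω) (S (k+1) ω) :=
        max_le_max hω le_rfl
      rw [max_add_aux (M (k+1) ω) (S (k+1) ω)] at hmm
      rw [neg_sub]
      exact hmm
    have hstep := step_le P 𝓕 n S α t k M hM htk (by omega) X hXint hXle
    have hsub : (P[fun ω' => max (Vh (k+1) ω') (S (k+1) ω') - α (k+1)|𝓕 k])
        =ᵐ[P] fun ω => (P[X|𝓕 k]) ω - α (k+1) := by
      have h := condExp_sub (μ := P) (m := 𝓕 k) hXint (integrable_const (α (k+1)))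
      rw [condExp_const (𝓕.le k)] at h
      exact h
    refine hrec.trans_le ?_
    filter_upwards [b1, hsub, hstep] with ω e1 e2 e3
    refine max_le e1 ?_
    rw [e2]
    exact e3


noncomputable def Va (k : ℕ) : Ω → ℝ :=
  if k = n - 1 then fun ω => (P[S n|𝓕 (n - 1)]) ω - α n
  else fun ω => max ((P[Vh (k+1)|𝓕 k]) ω)
      ((P[fun ω' => max (Vh (k+1) ω') (S (k+1) ω') - α (k+1)|𝓕 k]) ω)

noncomputable def gg (k : ℕ) : Ω → ℝ :=
  P[fun ω => max (S k ω - Va P 𝓕 n S α Vh k ω) 0|𝓕 (k - 1)]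

noncomputable def lam (k : ℕ) : Ω → ℝ := fun ω =>
  if gg P 𝓕 n S α Vh k ω ≤ α k then 0
  else (gg P 𝓕 n S α Vh k ω - α k) / gg P 𝓕 n S α Vh k ω

noncomputable def MM (t k : ℕ) : Ω → ℝ :=
  if n ≤ k then fun ω => S n ω - α n
  else if k ≤ t then Va P 𝓕 n S α Vh t
  else fun ω => Va P 𝓕 n S α Vh k ω
      + lam P 𝓕 n S α Vh k ω * max (S k ω - Va P 𝓕 n S α Vh k ω) 0

set_option linter.unusedSectionVars false

lemma lam_nonneg (k : ℕ) (hαk : 0 < α k) (ω : Ω) : 0 ≤ lam P 𝓕 n S α Vh k ω := by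
  unfold lam; split_ifs with h
  · exact le_rfl
  · push_neg at h
    exact div_nonneg (by linarith) (by linarith)

lemma lam_le_one (k : ℕ) (hαk : 0 < α k) (ω : Ω) : lam P 𝓕 n S α Vh k ω ≤ 1 := by
  unfold lam; split_ifs with h
  · exact zero_le_one
  · push_neg at h
    rw [div_le_one (by linarith)]
    linarith

lemma lam_mul (k : ℕ) (hαk : 0 < α k) (ω : Ω) :
    lam P 𝓕 n S α Vh k ω * gg P 𝓕 n S α Vh k ω = max (gg P 𝓕 n S α Vh k ω - α k) 0 := by
  unfold lam; split_ifs with h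
  · rw [zero_mul, max_eq_right (by linarith)]
  · push_neg at h
    rw [div_mul_cancel₀ _ (by linarith : gg P 𝓕 n S α Vh k ω ≠ 0),
      max_eq_left (by linarith)]

lemma one_sub_lam_mul_le (k : ℕ) (hαk : 0 < α k) (ω : Ω) :
    (1 - lam P 𝓕 n S α Vh k ω) * gg P 𝓕 n S α Vh k ω ≤ α k := by
  unfold lam; split_ifs with h
  · simpa using h
  · push_neg at h
    rw [sub_mul, one_mul, div_mul_cancel₀ _ (by linarith : gg P 𝓕 n S α Vh k ω ≠ 0)]
    linarith

lemma Va_meas (k : ℕ) (hk : k ≤ n - 1) : StronglyMeasurable[𝓕 k] (Va P 𝓕 n S α Vh k) := by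
  unfold Va; split_ifs with h
  · rw [h]
    exact (stronglyMeasurable_condExp.measurable.sub measurable_const).stronglyMeasurable
  · exact (stronglyMeasurable_condExp.measurable.max
      stronglyMeasurable_condExp.measurable).stronglyMeasurable

lemma Va_eq
    (hVlast : Vh (n - 1) =ᵐ[P] fun ω => (P[S n|𝓕 (n - 1)]) ω - α n)
    (hVrec : ∀ k, 1 ≤ k → k ≤ n - 1 →
      Vh (k - 1) =ᵐ[P] fun ω =>
        max ((P[Vh k|𝓕 (k - 1)]) ω)
          ((P[fun ω' => max (Vh k ω') (S k ω') - α k|𝓕 (k - 1)]) ω))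
    (k : ℕ) (hk : k ≤ n - 1) : Vh k =ᵐ[P] Va P 𝓕 n S α Vh k := by
  unfold Va; split_ifs with h
  · rw [h]; exact hVlast
  · have h2 := hVrec (k+1) (by omega) (by omega)
    rw [Nat.add_sub_cancel] at h2
    exact h2

lemma Va_int
    (hVint : ∀ k, k ≤ n - 1 → Integrable (Vh k) P)
    (hVlast : Vh (n - 1) =ᵐ[P] fun ω => (P[S n|𝓕 (n - 1)]) ω - α n)
    (hVrec : ∀ k, 1 ≤ k → k ≤ n - 1 →
      Vh (k - 1) =ᵐ[P] fun ω =>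
        max ((P[Vh k|𝓕 (k - 1)]) ω)
          ((P[fun ω' => max (Vh k ω') (S k ω') - α k|𝓕 (k - 1)]) ω))
    (k : ℕ) (hk : k ≤ n - 1) : Integrable (Va P 𝓕 n S α Vh k) P :=
  (hVint k hk).congr (Va_eq P 𝓕 n S α Vh hVlast hVrec k hk)

lemma lam_meas (k : ℕ) : StronglyMeasurable[𝓕 (k - 1)] (lam P 𝓕 n S α Vh k) := by
  have hg : Measurable[𝓕 (k - 1)] (gg P 𝓕 n S α Vh k) := stronglyMeasurable_condExp.measurable
  refine Measurable.stronglyMeasurable ?_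
  exact Measurable.ite (measurableSet_le hg measurable_const) measurable_const
    ((hg.sub measurable_const).div hg)

private lemma pen_aux (a b l : ℝ) (h0 : 0 ≤ l) (h1 : l ≤ 1) :
    max (-(a + l * max (b - a) 0 - b)) 0 = (1 - l) * max (b - a) 0 := by
  rcases le_total (b - a) 0 with h | h
  · rw [max_eq_right h, mul_zero, mul_zero]
    rw [show -(a + 0 - b) = b - a by ring]
    exact max_eq_right h
  · rw [max_eq_left h, show -(a + l * (b - a) - b) = (1 - l) * (b - a) by ring]
    exact max_eq_left (mul_nonneg (by linarith) h)

lemma lam_h_int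
    (hSint : ∀ t, Integrable (S t) P)
    (hVint : ∀ k, k ≤ n - 1 → Integrable (Vh k) P)
    (hVlast : Vh (n - 1) =ᵐ[P] fun ω => (P[S n|𝓕 (n - 1)]) ω - α n)
    (hVrec : ∀ k, 1 ≤ k → k ≤ n - 1 →
      Vh (k - 1) =ᵐ[P] fun ω =>
        max ((P[Vh k|𝓕 (k - 1)]) ω)
          ((P[fun ω' => max (Vh k ω') (S k ω') - α k|𝓕 (k - 1)]) ω))
    (k : ℕ) (hk : k ≤ n - 1) (hαk : 0 < α k) :
    Integrable (fun ω => lam P 𝓕 n S α Vh k ω * max (S k ω - Va P 𝓕 n S α Vh k ω) 0) P := by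
  have hh_int : Integrable (fun ω => max (S k ω - Va P 𝓕 n S α Vh k ω) 0) P :=
    ((hSint k).sub (Va_int P 𝓕 n S α Vh hVint hVlast hVrec k hk)).pos_part
  refine hh_int.mono' ?_ ?_
  · exact (((lam_meas P 𝓕 n S α Vh k).mono (𝓕.le (k - 1))).aestronglyMeasurable.mul
      hh_int.aestronglyMeasurable)
  · refine Eventually.of_forall fun ω => ?_
    have h0 : (0:ℝ) ≤ max (S k ω - Va P 𝓕 n S α Vh k ω) 0 := le_max_right _ _
    rw [Real.norm_eq_abs, abs_mul, abs_of_nonneg (lam_nonneg P 𝓕 n S α Vh k hαk ω),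
      abs_of_nonneg h0]
    exact mul_le_of_le_one_left h0 (lam_le_one P 𝓕 n S α Vh k hαk ω)

/-- Key conditional-expectation computation. -/
lemma MM_condexp
    (hSint : ∀ t, Integrable (S t) P)
    (hα : ∀ k, 1 ≤ k → k ≤ n → 0 < α k)
    (hVint : ∀ k, k ≤ n - 1 → Integrable (Vh k) P)
    (hVlast : Vh (n - 1) =ᵐ[P] fun ω => (P[S n|𝓕 (n - 1)]) ω - α n)
    (hVrec : ∀ k, 1 ≤ k → k ≤ n - 1 →
      Vh (k - 1) =ᵐ[P] fun ω =>
        max ((P[Vh k|𝓕 (k - 1)]) ω)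
          ((P[fun ω' => max (Vh k ω') (S k ω') - α k|𝓕 (k - 1)]) ω))
    (t k : ℕ) (ht1 : t + 1 ≤ k) (hk : k ≤ n - 1) :
    P[MM P 𝓕 n S α Vh t k|𝓕 (k - 1)] =ᵐ[P] Va P 𝓕 n S α Vh (k - 1) := by
  have hαk : 0 < α k := hα k (by omega) (by omega)
  have hMMk : MM P 𝓕 n S α Vh t k = fun ω => Va P 𝓕 n S α Vh k ω
      + lam P 𝓕 n S α Vh k ω * max (S k ω - Va P 𝓕 n S α Vh k ω) 0 := by
    unfold MM; rw [if_neg (by omega), if_neg (by omega)]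
  have hVaint : Integrable (Va P 𝓕 n S α Vh k) P :=
    Va_int P 𝓕 n S α Vh hVint hVlast hVrec k hk
  have hh_int : Integrable (fun ω => max (S k ω - Va P 𝓕 n S α Vh k ω) 0) P :=
    ((hSint k).sub hVaint).pos_part
  have hlh_int := lam_h_int P 𝓕 n S α Vh hSint hVint hVlast hVrec k hk hαk
  have c1 : P[MM P 𝓕 n S α Vh t k|𝓕 (k - 1)] =ᵐ[P]
      fun ω => (P[Va P 𝓕 n S α Vh k|𝓕 (k - 1)]) ω
        + (P[fun ω' => lam P 𝓕 n S α Vh k ω' * max (S k ω' - Va P 𝓕 n S α Vh k ω') 0|𝓕 (k - 1)]) ω := by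
    rw [hMMk]
    exact condExp_add hVaint hlh_int _
  have c2 : P[fun ω' => lam P 𝓕 n S α Vh k ω' * max (S k ω' - Va P 𝓕 n S α Vh k ω') 0|𝓕 (k - 1)]
      =ᵐ[P] fun ω => lam P 𝓕 n S α Vh k ω * gg P 𝓕 n S α Vh k ω :=
    condExp_mul_of_stronglyMeasurable_left (lam_meas P 𝓕 n S α Vh k) hlh_int hh_int
  -- expand Va (k-1)
  have hVa1 : Va P 𝓕 n S α Vh (k - 1) = fun ω =>
      max ((P[Vh k|𝓕 (k - 1)]) ω)
        ((P[fun ω' => max (Vh k ω') (S k ω') - α k|𝓕 (k - 1)]) ω) := by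
    unfold Va
    rw [if_neg (by omega), show k - 1 + 1 = k from by omega]
  have e1 : P[Va P 𝓕 n S α Vh k|𝓕 (k - 1)] =ᵐ[P] P[Vh k|𝓕 (k - 1)] :=
    condExp_congr_ae (Va_eq P 𝓕 n S α Vh hVlast hVrec k hk).symm
  have hfun : (fun ω' => max (Vh k ω') (S k ω') - α k) =ᵐ[P]
      (fun ω' => (Va P 𝓕 n S α Vh k ω' + max (S k ω' - Va P 𝓕 n S α Vh k ω') 0) - α k) := by
    filter_upwards [Va_eq P 𝓕 n S α Vh hVlast hVrec k hk] with ω hω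
    rw [← hω, ← max_add_aux]
  have hsum : Integrable (fun ω' => Va P 𝓕 n S α Vh k ω' + max (S k ω' - Va P 𝓕 n S α Vh k ω') 0) P :=
    hVaint.add hh_int
  have e2b : P[fun ω' => (Va P 𝓕 n S α Vh k ω' + max (S k ω' - Va P 𝓕 n S α Vh k ω') 0) - α k|𝓕 (k - 1)]
      =ᵐ[P] fun ω => (P[fun ω' => Va P 𝓕 n S α Vh k ω' + max (S k ω' - Va P 𝓕 n S α Vh k ω') 0|𝓕 (k - 1)]) ω - α k := by
    have h := condExp_sub (μ := P) (m := 𝓕 (k - 1)) hsum (integrable_const (α k))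
    rw [condExp_const (𝓕.le (k - 1))] at h
    exact h
  have e2c : P[fun ω' => Va P 𝓕 n S α Vh k ω' + max (S k ω' - Va P 𝓕 n S α Vh k ω') 0|𝓕 (k - 1)]
      =ᵐ[P] fun ω => (P[Va P 𝓕 n S α Vh k|𝓕 (k - 1)]) ω + gg P 𝓕 n S α Vh k ω :=
    condExp_add hVaint hh_int _
  have e2 : P[fun ω' => max (Vh k ω') (S k ω') - α k|𝓕 (k - 1)] =ᵐ[P]
      fun ω => (P[Vh k|𝓕 (k - 1)]) ω + gg P 𝓕 n S α Vh k ω - α k := by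
    refine ((condExp_congr_ae hfun).trans e2b).trans ?_
    filter_upwards [e2c, e1] with ω a1 a2
    simp only [a1, a2]
  -- combine
  rw [hVa1]
  filter_upwards [c1, c2, e1, e2] with ω a1 a2 a3 a4
  rw [a1, a2, a3, lam_mul P 𝓕 n S α Vh k hαk ω, a4,
    show (P[Vh k|𝓕 (k - 1)]) ω + gg P 𝓕 n S α Vh k ω - α k
      = (P[Vh k|𝓕 (k - 1)]) ω + (gg P 𝓕 n S α Vh k ω - α k) from by ring,
    max_add_aux2]

lemma Va_le_MM (hα : ∀ k, 1 ≤ k → k ≤ n → 0 < α k) (t k : ℕ)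
    (htk : t ≤ k) (hk : k ≤ n - 1) (hn : 1 ≤ n) :
    ∀ ω, Va P 𝓕 n S α Vh k ω ≤ MM P 𝓕 n S α Vh t k ω := by
  intro ω
  unfold MM
  rw [if_neg (by omega)]
  by_cases h2 : k ≤ t
  · rw [if_pos h2]
    obtain rfl : t = k := le_antisymm htk h2
    exact le_rfl
  · rw [if_neg h2]
    exact le_add_of_nonneg_right (mul_nonneg
      (lam_nonneg P 𝓕 n S α Vh k (hα k (by omega) (by omega)) ω) (le_max_right _ _))

lemma MM_super (hn : 1 ≤ n)
    (hSint : ∀ t, Integrable (S t) P)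
    (hα : ∀ k, 1 ≤ k → k ≤ n → 0 < α k)
    (hVint : ∀ k, k ≤ n - 1 → Integrable (Vh k) P)
    (hVlast : Vh (n - 1) =ᵐ[P] fun ω => (P[S n|𝓕 (n - 1)]) ω - α n)
    (hVrec : ∀ k, 1 ≤ k → k ≤ n - 1 →
      Vh (k - 1) =ᵐ[P] fun ω =>
        max ((P[Vh k|𝓕 (k - 1)]) ω)
          ((P[fun ω' => max (Vh k ω') (S k ω') - α k|𝓕 (k - 1)]) ω))
    (t : ℕ) (ht : t ≤ n - 1) :
    ∀ k, t ≤ k → k < n → P[MM P 𝓕 n S α Vh t (k + 1)|𝓕 k] ≤ᵐ[P] MM P 𝓕 n S α Vh t k := by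
  intro k hk1 hk2
  by_cases hkn : k + 1 = n
  · have hk' : k = n - 1 := by omega
    subst hk'
    have hMMn : MM P 𝓕 n S α Vh t (n - 1 + 1) = fun ω => S n ω - α n := by
      unfold MM; rw [if_pos (by omega)]
    have hc : P[MM P 𝓕 n S α Vh t (n - 1 + 1)|𝓕 (n - 1)] =ᵐ[P]
        fun ω => (P[S n|𝓕 (n - 1)]) ω - α n := by
      rw [hMMn]
      have h := condExp_sub (μ := P) (m := 𝓕 (n - 1)) (hSint n) (integrable_const (α n))
      rw [condExp_const (𝓕.le (n - 1))] at h
      exact h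
    have hVak : Va P 𝓕 n S α Vh (n - 1) = fun ω => (P[S n|𝓕 (n - 1)]) ω - α n := by
      unfold Va; rw [if_pos rfl]
    refine hc.trans_le ?_
    rw [← hVak]
    exact Eventually.of_forall (Va_le_MM P 𝓕 n S α Vh hα t (n - 1) hk1 le_rfl hn)
  · have h9 := MM_condexp P 𝓕 n S α Vh hSint hα hVint hVlast hVrec t (k + 1)
      (by omega) (by omega)
    rw [Nat.add_sub_cancel] at h9
    exact h9.trans_le
      (Eventually.of_forall (Va_le_MM P 𝓕 n S α Vh hα t k hk1 (by omega) hn))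

lemma MM_meas (hS : Adapted 𝓕 S) (t : ℕ) (ht : t ≤ n - 1) :
    ∀ k, t ≤ k → k ≤ n → StronglyMeasurable[𝓕 k] (MM P 𝓕 n S α Vh t k) := by
  intro k h1 h2
  unfold MM
  split_ifs with e1 e2
  · exact (((hS n).mono (𝓕.mono e1) le_rfl).sub measurable_const).stronglyMeasurable
  · obtain rfl : t = k := le_antisymm h1 e2
    exact Va_meas P 𝓕 n S α Vh t ht
  · have hk1 : k ≤ n - 1 := by omega
    have m1 : Measurable[𝓕 k] (Va P 𝓕 n S α Vh k) := (Va_meas P 𝓕 n S α Vh k hk1).measurable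
    have m2 : Measurable[𝓕 k] (lam P 𝓕 n S α Vh k) :=
      ((lam_meas P 𝓕 n S α Vh k).mono (𝓕.mono (by omega : k - 1 ≤ k))).measurable
    have m3 : Measurable[𝓕 k] (S k) := hS k
    exact (m1.add (m2.mul ((m3.sub m1).max measurable_const))).stronglyMeasurable

lemma MM_int
    (hSint : ∀ t, Integrable (S t) P)
    (hα : ∀ k, 1 ≤ k → k ≤ n → 0 < α k)
    (hVint : ∀ k, k ≤ n - 1 → Integrable (Vh k) P)
    (hVlast : Vh (n - 1) =ᵐ[P] fun ω => (P[S n|𝓕 (n - 1)]) ω - α n)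
    (hVrec : ∀ k, 1 ≤ k → k ≤ n - 1 →
      Vh (k - 1) =ᵐ[P] fun ω =>
        max ((P[Vh k|𝓕 (k - 1)]) ω)
          ((P[fun ω' => max (Vh k ω') (S k ω') - α k|𝓕 (k - 1)]) ω))
    (t : ℕ) (ht : t ≤ n - 1) :
    ∀ k, t ≤ k → k ≤ n → Integrable (MM P 𝓕 n S α Vh t k) P := by
  intro k h1 h2
  unfold MM
  split_ifs with e1 e2
  · exact (hSint n).sub (integrable_const _)
  · exact Va_int P 𝓕 n S α Vh hVint hVlast hVrec t ht
  · exact (Va_int P 𝓕 n S α Vh hVint hVlast hVrec k (by omega)).add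
      (lam_h_int P 𝓕 n S α Vh hSint hVint hVlast hVrec k (by omega)
        (hα k (by omega) (by omega)))

lemma MM_pen (hn : 1 ≤ n)
    (hSint : ∀ t, Integrable (S t) P)
    (hα : ∀ k, 1 ≤ k → k ≤ n → 0 < α k)
    (hVint : ∀ k, k ≤ n - 1 → Integrable (Vh k) P)
    (hVlast : Vh (n - 1) =ᵐ[P] fun ω => (P[S n|𝓕 (n - 1)]) ω - α n)
    (hVrec : ∀ k, 1 ≤ k → k ≤ n - 1 →
      Vh (k - 1) =ᵐ[P] fun ω =>
        max ((P[Vh k|𝓕 (k - 1)]) ω)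
          ((P[fun ω' => max (Vh k ω') (S k ω') - α k|𝓕 (k - 1)]) ω))
    (t : ℕ) (ht : t ≤ n - 1) :
    ∀ s, t + 1 ≤ s → s ≤ n →
      Integrable (fun ω => max (-(MM P 𝓕 n S α Vh t s ω - S s ω)) 0) P ∧
      (P[fun ω => max (-(MM P 𝓕 n S α Vh t s ω - S s ω)) 0|𝓕 (s - 1)]) ≤ᵐ[P]
        fun _ => α s := by
  intro s h1 h2
  by_cases hsn : s = n
  · subst hsn
    have hMMn : MM P 𝓕 s S α Vh t s = fun ω => S s ω - α s := by
      unfold MM; rw [if_pos le_rfl]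
    have hpen : (fun ω => max (-(MM P 𝓕 s S α Vh t s ω - S s ω)) 0) = fun _ => α s := by
      funext ω
      simp only [hMMn]
      rw [show S s ω - α s - S s ω = -α s from by ring, neg_neg]
      exact max_eq_left (hα s (by omega) le_rfl).le
    constructor
    · rw [hpen]; exact integrable_const _
    · rw [hpen, condExp_const (𝓕.le (s - 1))]
  · have hs1 : s ≤ n - 1 := by omega
    have hαs : 0 < α s := hα s (by omega) (by omega)
    have hMMs : MM P 𝓕 n S α Vh t s = fun ω => Va P 𝓕 n S α Vh s ω
        + lam P 𝓕 n S α Vh s ω * max (S s ω - Va P 𝓕 n S α Vh s ω) 0 := by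
      unfold MM; rw [if_neg (by omega), if_neg (by omega)]
    have hpen : (fun ω => max (-(MM P 𝓕 n S α Vh t s ω - S s ω)) 0)
        = fun ω => (1 - lam P 𝓕 n S α Vh s ω) * max (S s ω - Va P 𝓕 n S α Vh s ω) 0 := by
      funext ω
      simp only [hMMs]
      exact pen_aux (Va P 𝓕 n S α Vh s ω) (S s ω) (lam P 𝓕 n S α Vh s ω)
        (lam_nonneg P 𝓕 n S α Vh s hαs ω) (lam_le_one P 𝓕 n S α Vh s hαs ω)
    have hh_int : Integrable (fun ω => max (S s ω - Va P 𝓕 n S α Vh s ω) 0) P :=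
      ((hSint s).sub (Va_int P 𝓕 n S α Vh hVint hVlast hVrec s hs1)).pos_part
    have hmeas1 : StronglyMeasurable[𝓕 (s - 1)] (fun ω => 1 - lam P 𝓕 n S α Vh s ω) :=
      (measurable_const.sub (lam_meas P 𝓕 n S α Vh s).measurable).stronglyMeasurable
    have hint : Integrable
        (fun ω => (1 - lam P 𝓕 n S α Vh s ω) * max (S s ω - Va P 𝓕 n S α Vh s ω) 0) P := by
      refine hh_int.mono' ?_ ?_
      · exact ((hmeas1.mono (𝓕.le (s - 1))).aestronglyMeasurable.mul
          hh_int.aestronglyMeasurable)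
      · refine Eventually.of_forall fun ω => ?_
        have h0 : (0:ℝ) ≤ max (S s ω - Va P 𝓕 n S α Vh s ω) 0 := le_max_right _ _
        rw [Real.norm_eq_abs, abs_mul,
          abs_of_nonneg (by linarith [lam_le_one P 𝓕 n S α Vh s hαs ω] : (0:ℝ) ≤ 1 - lam P 𝓕 n S α Vh s ω),
          abs_of_nonneg h0]
        exact mul_le_of_le_one_left h0
          (by linarith [lam_nonneg P 𝓕 n S α Vh s hαs ω])
    constructor
    · rw [hpen]; exact hint
    · rw [hpen]
      have hc : P[fun ω => (1 - lam P 𝓕 n S α Vh s ω) * max (S s ω - Va P 𝓕 n S α Vh s ω) 0|𝓕 (s - 1)]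
          =ᵐ[P] fun ω => (1 - lam P 𝓕 n S α Vh s ω) * gg P 𝓕 n S α Vh s ω :=
        condExp_mul_of_stronglyMeasurable_left hmeas1 hint hh_int
      exact hc.trans_le
        (Eventually.of_forall fun ω => one_sub_lam_mul_le P 𝓕 n S α Vh s hαs ω)

lemma MM_t (t : ℕ) (ht : t < n) : MM P 𝓕 n S α Vh t t = Va P 𝓕 n S α Vh t := by
  unfold MM; rw [if_neg (by omega), if_pos le_rfl]

lemma MM_mem (hn : 1 ≤ n) (hS : Adapted 𝓕 S)
    (hSint : ∀ t, Integrable (S t) P)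
    (hα : ∀ k, 1 ≤ k → k ≤ n → 0 < α k)
    (hVint : ∀ k, k ≤ n - 1 → Integrable (Vh k) P)
    (hVlast : Vh (n - 1) =ᵐ[P] fun ω => (P[S n|𝓕 (n - 1)]) ω - α n)
    (hVrec : ∀ k, 1 ≤ k → k ≤ n - 1 →
      Vh (k - 1) =ᵐ[P] fun ω =>
        max ((P[Vh k|𝓕 (k - 1)]) ω)
          ((P[fun ω' => max (Vh k ω') (S k ω') - α k|𝓕 (k - 1)]) ω))
    (t : ℕ) (ht : t ≤ n - 1) :
    MemTCneg 𝓕 P S α t n (MM P 𝓕 n S α Vh t) := by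
  refine ⟨⟨MM_meas P 𝓕 n S α Vh hS t ht,
    MM_int P 𝓕 n S α Vh hSint hα hVint hVlast hVrec t ht,
    MM_super P 𝓕 n S α Vh hn hSint hα hVint hVlast hVrec t ht⟩, ?_⟩
  exact MM_pen P 𝓕 n S α Vh hn hSint hα hVint hVlast hVrec t ht

end Stmt10Aux


/-- Proposition 3.7(2): with `P = Q`, loss function `l(x) = x⁻` and `α_k > 0`, the
explicit process `V̂_{n-1} = E[S_n | F_{n-1}] - α_n`,
`V̂_{k-1} = max(E[V̂_k | F_{k-1}], E[V̂_k ∨ S_k - α_k | F_{k-1}])` is, at every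
date `t ∈ {0,…,n-1}`, an essential infimum of `{ M_t : (M_s)_{s=t}^n ∈ ℳ_{TC,t} }`. -/
theorem stmt_10
    {Ω : Type*} {m0 : MeasurableSpace Ω} (P : Measure Ω) [IsProbabilityMeasure P]
    (𝓕 : Filtration ℕ m0) (n : ℕ) (hn : 1 ≤ n)
    (htriv : ∀ s : Set Ω, MeasurableSet[𝓕 0] s → P s = 0 ∨ P s = 1)
    (S : ℕ → Ω → ℝ) (hS : Adapted 𝓕 S) (hSint : ∀ t, Integrable (S t) P)
    (α : ℕ → ℝ) (hα : ∀ k, 1 ≤ k → k ≤ n → 0 < α k)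
    (Vh : ℕ → Ω → ℝ)
    (hVint : ∀ k, k ≤ n - 1 → Integrable (Vh k) P)
    (hVlast : Vh (n - 1) =ᵐ[P] fun ω => (P[S n|𝓕 (n - 1)]) ω - α n)
    (hVrec : ∀ k, 1 ≤ k → k ≤ n - 1 →
      Vh (k - 1) =ᵐ[P] fun ω =>
        max ((P[Vh k|𝓕 (k - 1)]) ω)
          ((P[fun ω' => max (Vh k ω') (S k ω') - α k|𝓕 (k - 1)]) ω)) :
    ∀ t, t ≤ n - 1 →
      IsEssInf P {f : Ω → ℝ | ∃ M : ℕ → Ω → ℝ,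
        MemTCneg 𝓕 P S α t n M ∧ f = M t} (Vh t) := by
  intro t ht
  constructor
  · intro f hf
    obtain ⟨M, hM, rfl⟩ := hf
    exact Stmt10Aux.lb P 𝓕 n S α Vh hn hSint hVint hVlast hVrec t M hM
      (n - 1 - t) t (by omega) le_rfl
  · intro W' hW'
    have hmem := Stmt10Aux.MM_mem P 𝓕 n S α Vh hn hS hSint hα hVint hVlast hVrec t ht
    have h := hW' (Stmt10Aux.MM P 𝓕 n S α Vh t t) ⟨_, hmem, rfl⟩
    have hMMt := Stmt10Aux.MM_t P 𝓕 n S α Vh t (by omega)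
    filter_upwards [h, Stmt10Aux.Va_eq P 𝓕 n S α Vh hVlast hVrec t ht] with ω h1 h2
    rw [hMMt] at h1
    rw [h2]
    exact h1
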